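/- Let P : ℝ^N → ℝ be C², radially unbounded, with a unique minimizer u* where ∇P(u*) = 0, and suppose P satisfies the gradient-dominance (PL) inequality P(u) - P(u*) ≤ (1/(2κ))|∇P(u)|² for all u and some κ > 0. Let V(z) := (1/2)(P(z) - P(u*))². Then along solutions of ż = -k ∇P(z)(|∇P(z)|^{-α₁} + |∇P(z)|^{-α₂}) (with 0 < α₁ < 1, α₂ < 0, k > 0), V satisfies dV/dt ≤ -k(c₁ V^{γ₁} + c₂ V^{γ₂}) for all z ≠ u*, where c₁ = 2^{(2+3(2-α₁))/4} κ^{(2-α₁)/2}, c₂ = 2^{(2+3(2-α₂))/4} κ^{(2-α₂)/2}, γ₁ = (2+(2-α₁))/4 ∈ (0,1), γ₂ = (2+(2-α₂))/4 > 1. -/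

import Mathlib

open Real

theorem potential_game_lyapunov_inequality
    (N : ℕ) (P : EuclideanSpace ℝ (Fin N) → ℝ) (ustar : EuclideanSpace ℝ (Fin N))
    (κ k α₁ α₂ : ℝ) (hκ : 0 < κ) (hk : 0 < k)
    (hα₁ : 0 < α₁) (hα₁' : α₁ < 1) (hα₂ : α₂ < 0)
    (hP : ContDiff ℝ 2 P)
    (hcoercive : Filter.Tendsto P (Filter.cocompact (EuclideanSpace ℝ (Fin N))) Filter.atTop)
    (hmin : ∀ u, P ustar ≤ P u)
    (huniq : ∀ u, (∀ v, P u ≤ P v) → u = ustar)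
    (hgrad0 : gradient P ustar = 0)
    (hPL : ∀ u, P u - P ustar ≤ 1 / (2 * κ) * ‖gradient P u‖ ^ 2)
    (z : ℝ → EuclideanSpace ℝ (Fin N))
    (hz : ∀ t, HasDerivAt z
      (-(k * (‖gradient P (z t)‖ ^ (-α₁) + ‖gradient P (z t)‖ ^ (-α₂))) • gradient P (z t)) t) :
    (0 < (2 + (2 - α₁)) / 4 ∧ (2 + (2 - α₁)) / 4 < 1) ∧ 1 < (2 + (2 - α₂)) / 4 ∧
    ∀ t, z t ≠ ustar →
      ∃ d : ℝ, HasDerivAt (fun s => (1 / 2) * (P (z s) - P ustar) ^ 2) d t ∧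
        d ≤ -k * ((2 : ℝ) ^ ((2 + 3 * (2 - α₁)) / 4) * κ ^ ((2 - α₁) / 2) *
                    ((1 / 2) * (P (z t) - P ustar) ^ 2) ^ ((2 + (2 - α₁)) / 4)
                + (2 : ℝ) ^ ((2 + 3 * (2 - α₂)) / 4) * κ ^ ((2 - α₂) / 2) *
                    ((1 / 2) * (P (z t) - P ustar) ^ 2) ^ ((2 + (2 - α₂)) / 4)) := by
  refine ⟨⟨by linarith, by linarith⟩, by linarith, ?_⟩
  intro t _
  set g : EuclideanSpace ℝ (Fin N) := gradient P (z t) with hgdef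
  set A : ℝ := P (z t) - P ustar with hAdef
  set G : ℝ := ‖g‖ with hGdef
  have hA0 : 0 ≤ A := by have := hmin (z t); simp [hAdef]; linarith
  have hG0 : 0 ≤ G := norm_nonneg g
  have hdiff : DifferentiableAt ℝ P (z t) :=
    (hP.differentiable (by norm_num)).differentiableAt
  have hfd : HasFDerivAt P (InnerProductSpace.toDual ℝ _ g) (z t) :=
    hdiff.hasGradientAt.hasFDerivAt
  have hcomp : HasDerivAt (fun s => P (z s))
      (-(k * (G ^ (-α₁) + G ^ (-α₂))) * G ^ 2) t := by
    have h := hfd.comp_hasDerivAt t (hz t)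
    refine h.congr_deriv ?_
    rw [InnerProductSpace.toDual_apply_apply, real_inner_smul_right, real_inner_self_eq_norm_sq,
      ← hgdef, ← hGdef]
  set s : ℝ := G ^ (-α₁) + G ^ (-α₂) with hsdef
  have hd : HasDerivAt (fun u => (1 / 2 : ℝ) * (P (z u) - P ustar) ^ 2)
      ((1 / 2 : ℝ) * ((2 : ℕ) * (P (z t) - P ustar) ^ (2 - 1) * (-(k * s) * G ^ 2))) t :=
    ((hcomp.sub_const (P ustar)).pow 2).const_mul (1 / 2)
  refine ⟨_, hd, ?_⟩
  -- key inequality for each exponent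
  have key : ∀ α : ℝ, α < 2 →
      (2 : ℝ) ^ ((2 + 3 * (2 - α)) / 4) * κ ^ ((2 - α) / 2) *
        ((1 / 2) * A ^ 2) ^ ((2 + (2 - α)) / 4) ≤ A * (G ^ (-α) * G ^ 2) := by
    intro α hα
    have he : (0 : ℝ) < 2 - α := by linarith
    rcases eq_or_lt_of_le hG0 with hG | hG
    · -- G = 0 hence A = 0
      have hA : A = 0 := by
        have h1 := hPL (z t)
        rw [← hgdef, ← hGdef, ← hG] at h1
        simp at h1
        have : A ≤ 0 := by rw [hAdef]; linarith
        linarith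
      rw [hA]
      have : ((1 / 2 : ℝ) * (0:ℝ) ^ 2) ^ ((2 + (2 - α)) / 4) = 0 := by
        rw [show (1 / 2 : ℝ) * (0:ℝ) ^ 2 = 0 by ring]
        exact Real.zero_rpow (by positivity)
      rw [this]; simp
    · -- G > 0
      have hPL' : 2 * κ * A ≤ G ^ 2 := by
        have h1 := hPL (z t)
        rw [← hgdef, ← hGdef, ← hAdef] at h1
        have h2κ : (0:ℝ) < 2 * κ := by linarith
        rw [div_mul_eq_mul_div, one_mul, le_div_iff₀ h2κ] at h1
        linarith
      -- rewrite RHS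
      have hrhs : G ^ (-α) * G ^ 2 = G ^ (2 - α) := by
        rw [show ((G:ℝ) ^ (2:ℕ)) = G ^ (2:ℝ) by rw [← Real.rpow_natCast]; norm_num,
          ← Real.rpow_add hG]
        ring_nf
      rw [hrhs]
      -- rewrite LHS
      have hLHS : (2 : ℝ) ^ ((2 + 3 * (2 - α)) / 4) * κ ^ ((2 - α) / 2) *
          ((1 / 2) * A ^ 2) ^ ((2 + (2 - α)) / 4)
          = A * (2 * κ * A) ^ ((2 - α) / 2) := by
        have hA2 : (1 / 2 : ℝ) * A ^ 2 = A ^ 2 / 2 := by ring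
        rcases eq_or_lt_of_le hA0 with hA | hApos
        · rw [← hA]
          have h0 : ((1 / 2 : ℝ) * (0:ℝ) ^ 2) ^ ((2 + (2 - α)) / 4) = 0 := by
            rw [show (1 / 2 : ℝ) * (0:ℝ) ^ 2 = 0 by ring]
            exact Real.zero_rpow (by positivity)
          rw [h0]; simp
        · rw [hA2, Real.div_rpow (by positivity) (by norm_num)]
          have hApow : ((A:ℝ) ^ (2:ℕ)) ^ ((2 + (2 - α)) / 4 : ℝ)
              = A * A ^ ((2 - α) / 2 : ℝ) := by
            rw [← Real.rpow_natCast A 2, ← Real.rpow_mul hA0]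
            rw [show ((2:ℕ):ℝ) * ((2 + (2 - α)) / 4) = 1 + (2 - α) / 2 by push_cast; ring]
            rw [Real.rpow_add hApos, Real.rpow_one]
          rw [hApow]
          rw [Real.mul_rpow (by positivity) hA0, Real.mul_rpow (by norm_num) hκ.le]
          rw [show ((2:ℝ) + 3 * (2 - α)) / 4 = (2 + (2 - α)) / 4 + (2 - α) / 2 by ring,
            Real.rpow_add two_pos]
          have h2ne : ((2:ℝ) ^ ((2 + (2 - α)) / 4 : ℝ)) ≠ 0 :=
            (Real.rpow_pos_of_pos two_pos _).ne'
          field_simp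
      rw [hLHS]
      have h1 : (2 * κ * A) ^ ((2 - α) / 2) ≤ (G ^ 2) ^ ((2 - α) / 2) :=
        Real.rpow_le_rpow (by positivity) hPL' (by positivity)
      have h2 : ((G:ℝ) ^ (2:ℕ)) ^ ((2 - α) / 2 : ℝ) = G ^ (2 - α) := by
        rw [show ((G:ℝ) ^ (2:ℕ)) = G ^ (2:ℝ) by rw [← Real.rpow_natCast]; norm_num,
          ← Real.rpow_mul hG0]
        ring_nf
      calc A * (2 * κ * A) ^ ((2 - α) / 2) ≤ A * (G ^ 2) ^ ((2 - α) / 2 : ℝ) := by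
            exact mul_le_mul_of_nonneg_left h1 hA0
        _ = A * G ^ (2 - α) := by rw [h2]
  have k1 := key α₁ (by linarith)
  have k2 := key α₂ (by linarith)
  rw [← hAdef]
  have expand : (1 / 2 : ℝ) * ((2 : ℕ) * A ^ (2 - 1) * (-(k * s) * G ^ 2))
      = -k * (A * (G ^ (-α₁) * G ^ 2) + A * (G ^ (-α₂) * G ^ 2)) := by
    simp [hsdef]; ring
  rw [expand]
  have := add_le_add k1 k2
  nlinarith [this, hk.le]
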